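/- Let p be an odd prime with p ≡ 5 (mod 6) and let k be a field of characteristic p. In k[X₁,X₂,X₃,X₄], let κ = X₂²X₄² − 4X₁X₃X₄² + 4X₁³X₄ − 4X₃³X₄ + 4X₁²X₃² − 8X₁X₂²X₃ + 4X₂⁴, and let v = aX₁ + bX₂ + cX₃ + X₄ over R = k[a,b,c]. Then: (1) the coefficient of X₁^{p−1}X₃^{p−1}X₄^{2p−2} in κ^{p−1} equals (−4)^{p−1} in k; and (2) the coefficient c_{p−1,p−2,p−1,2p−1} of X₁^{p−1}X₂^{p−2}X₃^{p−1}X₄^{2p−1} in (vκ)^{p−1}, regarded as a polynomial in the variable b, has degree exactly p−2, with the coefficient of b^{p−2} equal to (p−1)(−4)^{p−1} = −(−4)^{p−1} ≠ 0 in k. -/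

import Mathlib

open MvPolynomial

noncomputable section Stmt5

/-- Exponent vector `(i₁,i₂,i₃,i₄)` for the variables `X₁,X₂,X₃,X₄`. -/
def expv (i1 i2 i3 i4 : ℕ) : Fin 4 →₀ ℕ := Finsupp.equivFunOnFinite.symm ![i1, i2, i3, i4]

variable (k : Type*) [Field k]

/-- The Kummer quartic surface `κ` of the genus-2 curve `z² = x⁶ − 1`, in the variables
`X₁ = X 0, X₂ = X 1, X₃ = X 2, X₄ = X 3` over `k`. -/
def kappaK : MvPolynomial (Fin 4) k :=
  X 1 ^ 2 * X 3 ^ 2 - 4 * X 0 * X 2 * X 3 ^ 2 + 4 * X 0 ^ 3 * X 3 - 4 * X 2 ^ 3 * X 3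
    + 4 * X 0 ^ 2 * X 2 ^ 2 - 8 * X 0 * X 1 ^ 2 * X 2 + 4 * X 1 ^ 4

/-- The same Kummer surface `κ`, over `R = k[a,b,c]` (with `a = X 0, b = X 1, c = X 2`). -/
def kappaR : MvPolynomial (Fin 4) (MvPolynomial (Fin 3) k) :=
  X 1 ^ 2 * X 3 ^ 2 - 4 * X 0 * X 2 * X 3 ^ 2 + 4 * X 0 ^ 3 * X 3 - 4 * X 2 ^ 3 * X 3
    + 4 * X 0 ^ 2 * X 2 ^ 2 - 8 * X 0 * X 1 ^ 2 * X 2 + 4 * X 1 ^ 4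

/-- The plane `v = a X₁ + b X₂ + c X₃ + X₄` over `R = k[a,b,c]`. -/
def vpl : MvPolynomial (Fin 4) (MvPolynomial (Fin 3) k) :=
  C (X 0) * X 0 + C (X 1) * X 1 + C (X 2) * X 2 + X 3

/-- `c_{i₁,i₂,i₃,i₄} ∈ R = k[a,b,c]`: the coefficient of `X₁^{i₁}X₂^{i₂}X₃^{i₃}X₄^{i₄}`
in `(vκ)^{p−1}`. -/
def cc (p i1 i2 i3 i4 : ℕ) : MvPolynomial (Fin 3) k :=
  coeff (expv i1 i2 i3 i4) ((vpl k * kappaR k) ^ (p - 1))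


open Pointwise

@[simp] lemma expv_apply (i1 i2 i3 i4 : ℕ) (j : Fin 4) :
    expv i1 i2 i3 i4 j = ![i1, i2, i3, i4] j := by
  simp [expv]

lemma eq_expv (m : Fin 4 →₀ ℕ) : m = expv (m 0) (m 1) (m 2) (m 3) := by
  ext j; fin_cases j <;> simp

lemma expv_eq_expv_iff {a b c d a' b' c' d' : ℕ} :
    expv a b c d = expv a' b' c' d' ↔ a = a' ∧ b = b' ∧ c = c' ∧ d = d' := by
  constructor
  · intro h
    exact ⟨by simpa using DFunLike.congr_fun h 0, by simpa using DFunLike.congr_fun h 1,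
      by simpa using DFunLike.congr_fun h 2, by simpa using DFunLike.congr_fun h 3⟩
  · rintro ⟨rfl, rfl, rfl, rfl⟩; rfl

lemma expv_add (a b c d a' b' c' d' : ℕ) :
    expv a b c d + expv a' b' c' d' = expv (a + a') (b + b') (c + c') (d + d') := by
  ext j; fin_cases j <;> simp

lemma expv_zero_eq : (0 : Fin 4 →₀ ℕ) = expv 0 0 0 0 := by
  ext j; fin_cases j <;> simp

def wt (m : Fin 4 →₀ ℕ) : ℕ := m 0 + 2 * m 1 + m 2

lemma wt_add (a b : Fin 4 →₀ ℕ) : wt (a + b) = wt a + wt b := by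
  simp [wt]; ring

@[simp] lemma wt_expv (i1 i2 i3 i4 : ℕ) : wt (expv i1 i2 i3 i4) = i1 + 2 * i2 + i3 := by
  simp [wt]

lemma monomial_expv (i1 i2 i3 i4 : ℕ) (r : k) :
    monomial (expv i1 i2 i3 i4) r = C r * (X 0 ^ i1 * X 1 ^ i2 * X 2 ^ i3 * X 3 ^ i4) := by
  rw [monomial_eq]
  congr 1
  rw [Finsupp.prod_fintype _ _ (fun i => pow_zero _)]
  simp [Fin.prod_univ_four]

lemma kappaK_eq : kappaK k =
    monomial (expv 0 2 0 2) 1 + monomial (expv 1 0 1 2) (-4) + monomial (expv 3 0 0 1) 4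
      + monomial (expv 0 0 3 1) (-4) + monomial (expv 2 0 2 0) 4
      + monomial (expv 1 2 1 0) (-8) + monomial (expv 0 4 0 0) 4 := by
  simp only [kappaK, monomial_expv, map_neg, map_ofNat, map_one]
  ring

lemma supp_kappaK {m : Fin 4 →₀ ℕ} (hm : m ∈ (kappaK k).support) :
    2 ≤ wt m ∧ (wt m = 2 → m = expv 1 0 1 2) := by
  rw [kappaK_eq, mem_support_iff] at hm
  simp only [coeff_add, coeff_monomial] at hm
  have H : m = expv 0 2 0 2 ∨ m = expv 1 0 1 2 ∨ m = expv 3 0 0 1 ∨ m = expv 0 0 3 1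
      ∨ m = expv 2 0 2 0 ∨ m = expv 1 2 1 0 ∨ m = expv 0 4 0 0 := by
    by_contra h
    push_neg at h
    obtain ⟨h1,h2,h3,h4,h5,h6,h7⟩ := h
    simp [Ne.symm h1, Ne.symm h2, Ne.symm h3, Ne.symm h4, Ne.symm h5, Ne.symm h6, Ne.symm h7] at hm
  rcases H with rfl|rfl|rfl|rfl|rfl|rfl|rfl <;> simp [expv_eq_expv_iff] <;> omega

lemma supp_kappaK_pow (n : ℕ) {m : Fin 4 →₀ ℕ} (hm : m ∈ ((kappaK k ^ n)).support) :
    2 * n ≤ wt m ∧ (wt m = 2 * n → m = expv n 0 n (2 * n)) := by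
  induction n generalizing m with
  | zero =>
    rw [pow_zero, mem_support_iff, coeff_one] at hm
    have : m = 0 := by by_contra hne; simp [Ne.symm hne] at hm
    subst this
    refine ⟨by simp [wt], fun _ => by rw [expv_zero_eq]⟩
  | succ n ih =>
    rw [pow_succ] at hm
    obtain ⟨a, ha, b, hb, rfl⟩ := Finset.mem_add.mp (support_mul _ _ hm)
    obtain ⟨ha1, ha2⟩ := ih ha
    obtain ⟨hb1, hb2⟩ := supp_kappaK k hb
    rw [wt_add]
    constructor
    · omega
    · intro h
      have hwa : wt a = 2 * n := by omega
      have hwb : wt b = 2 := by omega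
      rw [ha2 hwa, hb2 hwb, expv_add]
      rw [expv_eq_expv_iff]
      omega

lemma coeff_e2 : coeff (expv 1 0 1 2) (kappaK k) = -4 := by
  rw [kappaK_eq]
  simp [coeff_monomial, expv_eq_expv_iff]

lemma coeff_kappaK_pow (n : ℕ) :
    coeff (expv n 0 n (2 * n)) ((kappaK k) ^ n) = (-4 : k) ^ n := by
  induction n with
  | zero => simp [← expv_zero_eq]
  | succ n ih =>
    rw [pow_succ, coeff_mul]
    rw [Finset.sum_eq_single_of_mem (expv n 0 n (2*n), expv 1 0 1 2)]
    · rw [ih, coeff_e2, pow_succ]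
    · rw [Finset.HasAntidiagonal.mem_antidiagonal, expv_add, expv_eq_expv_iff]
      omega
    · rintro ⟨a, b⟩ hab hne
      rw [Finset.HasAntidiagonal.mem_antidiagonal] at hab
      by_contra h0
      have ha : a ∈ (kappaK k ^ n).support := by
        rw [mem_support_iff]; intro h; rw [h, zero_mul] at h0; exact h0 rfl
      have hb : b ∈ (kappaK k).support := by
        rw [mem_support_iff]; intro h; rw [h, mul_zero] at h0; exact h0 rfl
      obtain ⟨ha1, ha2⟩ := supp_kappaK_pow k n ha
      obtain ⟨hb1, hb2⟩ := supp_kappaK k hb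
      have hw : wt a + wt b = 2 * (n+1) := by
        rw [← wt_add, hab, wt_expv]; omega
      have hwa : wt a = 2 * n := by omega
      have hwb : wt b = 2 := by omega
      exact hne (by rw [ha2 hwa, hb2 hwb])

def expw (i j l : ℕ) : Fin 3 →₀ ℕ := Finsupp.equivFunOnFinite.symm ![i, j, l]

@[simp] lemma expw_apply (i j l : ℕ) (t : Fin 3) :
    expw i j l t = ![i, j, l] t := by
  simp [expw]

lemma eq_expw (m : Fin 3 →₀ ℕ) : m = expw (m 0) (m 1) (m 2) := by
  ext t; fin_cases t <;> simp

lemma expw_eq_expw_iff {a b c a' b' c' : ℕ} :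
    expw a b c = expw a' b' c' ↔ a = a' ∧ b = b' ∧ c = c' := by
  constructor
  · intro h
    exact ⟨by simpa using DFunLike.congr_fun h 0, by simpa using DFunLike.congr_fun h 1,
      by simpa using DFunLike.congr_fun h 2⟩
  · rintro ⟨rfl, rfl, rfl⟩; rfl

lemma expw_zero_eq : (0 : Fin 3 →₀ ℕ) = expw 0 0 0 := by
  ext t; fin_cases t <;> simp

lemma single_eq_expw (j : ℕ) : Finsupp.single (1 : Fin 3) j = expw 0 j 0 := by
  ext t; fin_cases t <;> simp [Finsupp.single_apply]

/-- `S = X₁ + X₂ + X₃ + X₄` over `k`. -/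
def Sp : MvPolynomial (Fin 4) k := X 0 + X 1 + X 2 + X 3

lemma sub_single_apply (u : Fin 4 →₀ ℕ) (s t : Fin 4) :
    (u - Finsupp.single s 1 : Fin 4 →₀ ℕ) t = u t - (if s = t then 1 else 0) := by
  simp [Finsupp.tsub_apply, Finsupp.single_apply]

lemma expv_sub_single1 (i j : ℕ) :
    expv 0 (i + 1) 0 j - Finsupp.single 1 1 = expv 0 i 0 j := by
  ext t; fin_cases t <;> simp [sub_single_apply]

lemma expv_sub_single3 (i j : ℕ) :
    expv 0 i 0 (j + 1) - Finsupp.single 3 1 = expv 0 i 0 j := by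
  ext t; fin_cases t <;> simp [sub_single_apply]

lemma coeff_Sp_pow (n : ℕ) : ∀ i j : ℕ,
    coeff (expv 0 i 0 j) ((Sp k) ^ n) = if i + j = n then (n.choose i : k) else 0 := by
  induction n with
  | zero =>
    intro i j
    rw [pow_zero, coeff_one]
    rcases Nat.eq_zero_or_pos (i + j) with h | h
    · have hi : i = 0 := by omega
      have hj : j = 0 := by omega
      subst hi; subst hj
      simp [← expv_zero_eq]
    · have hne : (0 : Fin 4 →₀ ℕ) ≠ expv 0 i 0 j := by
        rw [expv_zero_eq, Ne, expv_eq_expv_iff]; omega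
      rw [if_neg hne, if_neg (by omega)]
  | succ n ih =>
    intro i j
    have hS : (Sp k) ^ (n + 1)
        = Sp k ^ n * X 0 + Sp k ^ n * X 1 + Sp k ^ n * X 2 + Sp k ^ n * X 3 := by
      rw [pow_succ, Sp]; ring
    rw [hS]
    simp only [coeff_add, coeff_mul_X']
    have h0 : (0 : Fin 4) ∉ (expv 0 i 0 j).support := by simp
    have h2 : (2 : Fin 4) ∉ (expv 0 i 0 j).support := by simp
    rw [if_neg h0, if_neg h2]
    rcases i with _ | i
    · rw [if_neg (by simp)]
      rcases j with _ | j
      · rw [if_neg (by simp)]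
        rw [if_neg (by omega)]
        simp
      · rw [if_pos (by simp), expv_sub_single3, ih]
        by_cases hc : j = n
        · rw [if_pos (by omega), if_pos (by omega)]
          simp
        · rw [if_neg (by omega), if_neg (by omega)]
          simp
    · rcases j with _ | j
      · rw [if_pos (by simp), if_neg (by simp), expv_sub_single1, ih]
        by_cases hc : i = n
        · rw [if_pos (by omega), if_pos (by omega)]
          subst hc
          simp
        · rw [if_neg (by omega), if_neg (by omega)]
          simp
      · rw [if_pos (by simp), if_pos (by simp), expv_sub_single1, expv_sub_single3, ih, ih]
        by_cases hc : i + j + 1 = n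
        · rw [if_pos (by omega), if_pos (by omega), if_pos (by omega)]
          subst hc
          rw [Nat.choose_succ_succ (i + j + 1) i]
          push_cast
          ring
        · rw [if_neg (by omega), if_neg (by omega), if_neg (by omega)]
          simp

lemma single_add_expw0 (a b c : ℕ) :
    Finsupp.single (0 : Fin 3) 1 + expw a b c = expw (a + 1) b c := by
  ext t; fin_cases t <;> simp [Finsupp.single_apply] <;> omega

lemma single_add_expw1 (a b c : ℕ) :
    Finsupp.single (1 : Fin 3) 1 + expw a b c = expw a (b + 1) c := by
  ext t; fin_cases t <;> simp [Finsupp.single_apply] <;> omega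

lemma single_add_expw2 (a b c : ℕ) :
    Finsupp.single (2 : Fin 3) 1 + expw a b c = expw a b (c + 1) := by
  ext t; fin_cases t <;> simp [Finsupp.single_apply] <;> omega

lemma X_mul_monomial3 (i : Fin 3) (w : Fin 3 →₀ ℕ) (e : k) :
    (X i : MvPolynomial (Fin 3) k) * monomial w e = monomial (Finsupp.single i 1 + w) e := by
  rw [X, monomial_mul, one_mul]



lemma coeff_vpl_pow (n : ℕ) : ∀ u : Fin 4 →₀ ℕ,
    coeff u ((vpl k) ^ n)
      = monomial (expw (u 0) (u 1) (u 2)) (coeff u ((Sp k) ^ n)) := by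
  induction n with
  | zero =>
    intro u
    rw [pow_zero, pow_zero, coeff_one]
    rcases eq_or_ne u 0 with rfl | hne
    · rw [if_pos rfl, coeff_one, if_pos rfl]
      simp [← expw_zero_eq]
    · rw [if_neg (Ne.symm hne), coeff_one, if_neg (Ne.symm hne)]
      simp
  | succ n ih =>
    intro u
    have hv : (vpl k) ^ (n + 1)
        = C (X 0) * ((vpl k) ^ n * X 0) + C (X 1) * ((vpl k) ^ n * X 1)
          + C (X 2) * ((vpl k) ^ n * X 2) + (vpl k) ^ n * X 3 := by
      rw [pow_succ, vpl]; ring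
    have hS : (Sp k) ^ (n + 1)
        = Sp k ^ n * X 0 + Sp k ^ n * X 1 + Sp k ^ n * X 2 + Sp k ^ n * X 3 := by
      rw [pow_succ, Sp]; ring
    rw [hv, hS]
    simp only [coeff_add, coeff_C_mul, coeff_mul_X', map_add]
    congr 1
    congr 1
    congr 1
    · by_cases h : (0 : Fin 4) ∈ u.support
      · rw [if_pos h, if_pos h, ih]
        have hu : 1 ≤ u 0 := by
          rw [Finsupp.mem_support_iff] at h; omega
        have e0 : (u - Finsupp.single 0 1 : Fin 4 →₀ ℕ) 0 = u 0 - 1 := by rw [sub_single_apply]; simp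
        have e1 : (u - Finsupp.single 0 1 : Fin 4 →₀ ℕ) 1 = u 1 := by rw [sub_single_apply]; simp
        have e2 : (u - Finsupp.single 0 1 : Fin 4 →₀ ℕ) 2 = u 2 := by rw [sub_single_apply]; simp
        simp only [e0, e1, e2]
        rw [X_mul_monomial3, single_add_expw0]
        have : u 0 - 1 + 1 = u 0 := by omega
        rw [this]
      · rw [if_neg h, if_neg h, mul_zero]
        simp
    · by_cases h : (1 : Fin 4) ∈ u.support
      · rw [if_pos h, if_pos h, ih]
        have hu : 1 ≤ u 1 := by
          rw [Finsupp.mem_support_iff] at h; omega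
        have e0 : (u - Finsupp.single 1 1 : Fin 4 →₀ ℕ) 0 = u 0 := by rw [sub_single_apply]; simp
        have e1 : (u - Finsupp.single 1 1 : Fin 4 →₀ ℕ) 1 = u 1 - 1 := by rw [sub_single_apply]; simp
        have e2 : (u - Finsupp.single 1 1 : Fin 4 →₀ ℕ) 2 = u 2 := by rw [sub_single_apply]; simp
        simp only [e0, e1, e2]
        rw [X_mul_monomial3, single_add_expw1]
        have : u 1 - 1 + 1 = u 1 := by omega
        rw [this]
      · rw [if_neg h, if_neg h, mul_zero]
        simp
    · by_cases h : (2 : Fin 4) ∈ u.support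
      · rw [if_pos h, if_pos h, ih]
        have hu : 1 ≤ u 2 := by
          rw [Finsupp.mem_support_iff] at h; omega
        have e0 : (u - Finsupp.single 2 1 : Fin 4 →₀ ℕ) 0 = u 0 := by rw [sub_single_apply]; simp
        have e1 : (u - Finsupp.single 2 1 : Fin 4 →₀ ℕ) 1 = u 1 := by rw [sub_single_apply]; simp
        have e2 : (u - Finsupp.single 2 1 : Fin 4 →₀ ℕ) 2 = u 2 - 1 := by rw [sub_single_apply]; simp
        simp only [e0, e1, e2]
        rw [X_mul_monomial3, single_add_expw2]
        have : u 2 - 1 + 1 = u 2 := by omega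
        rw [this]
      · rw [if_neg h, if_neg h, mul_zero]
        simp
    · by_cases h : (3 : Fin 4) ∈ u.support
      · rw [if_pos h, if_pos h, ih]
        have e0 : (u - Finsupp.single 3 1 : Fin 4 →₀ ℕ) 0 = u 0 := by rw [sub_single_apply]; simp
        have e1 : (u - Finsupp.single 3 1 : Fin 4 →₀ ℕ) 1 = u 1 := by rw [sub_single_apply]; simp
        have e2 : (u - Finsupp.single 3 1 : Fin 4 →₀ ℕ) 2 = u 2 := by rw [sub_single_apply]; simp
        simp only [e0, e1, e2]
      · rw [if_neg h, if_neg h]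
        simp

lemma kappaR_map : kappaR k = MvPolynomial.map (C : k →+* MvPolynomial (Fin 3) k) (kappaK k) := by
  simp [kappaK, kappaR]

lemma coeff_kappaR_pow (n : ℕ) (t : Fin 4 →₀ ℕ) :
    coeff t ((kappaR k) ^ n) = C (coeff t ((kappaK k) ^ n)) := by
  rw [kappaR_map, ← map_pow, coeff_map]

lemma cc_expand (n : ℕ) (μ : Fin 4 →₀ ℕ) (m : Fin 3 →₀ ℕ) :
    coeff m (coeff μ ((vpl k * kappaR k) ^ n))
      = ∑ x ∈ Finset.HasAntidiagonal.antidiagonal μ,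
          (if expw (x.1 0) (x.1 1) (x.1 2) = m then
            coeff x.2 ((kappaK k) ^ n) * coeff x.1 ((Sp k) ^ n) else 0) := by
  rw [mul_pow, coeff_mul, coeff_sum]
  refine Finset.sum_congr rfl fun x hx => ?_
  rw [coeff_vpl_pow, coeff_kappaR_pow, mul_comm, C_mul_monomial, coeff_monomial]

lemma cc_support (n : ℕ) (hn : 1 ≤ n) (m : Fin 3 →₀ ℕ)
    (hm : coeff m (coeff (expv n (n-1) n (2*n+1)) ((vpl k * kappaR k) ^ n)) ≠ 0) :
    m 1 ≤ n - 1 ∧ (m 1 = n - 1 → m = Finsupp.single 1 (n-1)) := by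
  rw [cc_expand] at hm
  obtain ⟨x, hx, hx0⟩ := Finset.exists_ne_zero_of_sum_ne_zero hm
  rw [Finset.HasAntidiagonal.mem_antidiagonal] at hx
  have hw : expw (x.1 0) (x.1 1) (x.1 2) = m := by
    by_contra h; rw [if_neg h] at hx0; exact hx0 rfl
  rw [if_pos hw] at hx0
  have hr : x.2 ∈ ((kappaK k) ^ n).support := by
    rw [mem_support_iff]; intro h; rw [h, zero_mul] at hx0; exact hx0 rfl
  have h2 := (supp_kappaK_pow k n hr).1
  have hsum : wt x.1 + wt x.2 = n + 2*(n-1) + n := by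
    rw [← wt_add, hx, wt_expv]
  have hm0 : m 0 = x.1 0 := by rw [← hw]; simp
  have hm1 : m 1 = x.1 1 := by rw [← hw]; simp
  have hm2 : m 2 = x.1 2 := by rw [← hw]; simp
  have hwx : wt x.1 = x.1 0 + 2 * x.1 1 + x.1 2 := rfl
  constructor
  · omega
  · intro h1
    have hz : m 0 = 0 ∧ m 2 = 0 := by omega
    rw [single_eq_expw, eq_expw m, hz.1, hz.2, h1, expw_eq_expw_iff]
    omega

lemma cc_main (n : ℕ) (hn : 1 ≤ n) :
    coeff (Finsupp.single 1 (n-1)) (coeff (expv n (n-1) n (2*n+1)) ((vpl k * kappaR k) ^ n))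
      = (n : k) * (-4) ^ n := by
  rw [cc_expand]
  rw [Finset.sum_eq_single_of_mem (expv 0 (n-1) 0 1, expv n 0 n (2*n))]
  · rw [if_pos (by rw [single_eq_expw]; simp)]
    rw [coeff_kappaK_pow, coeff_Sp_pow, if_pos (by omega : (n-1) + 1 = n)]
    have hch : n.choose (n-1) = n := by
      have h := Nat.choose_symm hn
      rw [Nat.choose_one_right] at h
      exact h
    rw [hch, mul_comm]
  · rw [Finset.HasAntidiagonal.mem_antidiagonal, expv_add, expv_eq_expv_iff]
    omega
  · rintro ⟨a, b⟩ hx hne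
    rw [Finset.HasAntidiagonal.mem_antidiagonal] at hx
    by_contra h0
    have hw : expw (a 0) (a 1) (a 2) = Finsupp.single 1 (n-1) := by
      by_contra h
      rw [if_neg (by exact h)] at h0
      exact h0 rfl
    rw [if_pos (by exact hw)] at h0
    have hb : b ∈ ((kappaK k) ^ n).support := by
      rw [mem_support_iff]; intro h; rw [h, zero_mul] at h0; exact h0 rfl
    obtain ⟨hb1, hb2⟩ := supp_kappaK_pow k n hb
    have hsum : wt a + wt b = n + 2*(n-1) + n := by
      rw [← wt_add, hx, wt_expv]
    have ha0 : a 0 = 0 ∧ a 1 = n - 1 ∧ a 2 = 0 := by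
      rw [single_eq_expw, expw_eq_expw_iff] at hw
      exact hw
    have hwa : wt a = 2 * (n-1) := by
      rw [show wt a = a 0 + 2 * a 1 + a 2 from rfl]
      omega
    have hwb : wt b = 2 * n := by omega
    have hbeq : b = expv n 0 n (2*n) := hb2 hwb
    have ha3 : a 3 = 1 := by
      have h3 := DFunLike.congr_fun hx 3
      rw [Finsupp.add_apply, hbeq] at h3
      simp at h3
      omega
    have haeq : a = expv 0 (n-1) 0 1 := by
      rw [eq_expv a, ha0.1, ha0.2.1, ha0.2.2, ha3]
    exact hne (Prod.ext haeq hbeq)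


/-- For `p ≡ 5 (mod 6)` an odd prime and `k` of characteristic `p`:
(1) the coefficient of `X₁^{p−1}X₃^{p−1}X₄^{2p−2}` in `κ^{p−1}` is `(−4)^{p−1}`;
(2) `c_{p−1,p−2,p−1,2p−1}`, as a polynomial in `b`, has degree exactly `p−2`, its
`b^{p−2}`-coefficient being the nonzero constant `(p−1)(−4)^{p−1} = −(−4)^{p−1}`. -/
theorem stmt5 (p : ℕ) (hp : p.Prime) (hodd : Odd p) (hp5 : p % 6 = 5) [CharP k p] :
    coeff (expv (p - 1) 0 (p - 1) (2 * p - 2)) ((kappaK k) ^ (p - 1)) = (-4 : k) ^ (p - 1) ∧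
    MvPolynomial.degreeOf (1 : Fin 3) (cc k p (p - 1) (p - 2) (p - 1) (2 * p - 1)) = p - 2 ∧
    (∀ m : Fin 3 →₀ ℕ, m 1 = p - 2 →
      coeff m (cc k p (p - 1) (p - 2) (p - 1) (2 * p - 1)) =
        if m = Finsupp.single 1 (p - 2) then ((p : k) - 1) * (-4 : k) ^ (p - 1) else 0) ∧
    ((p : k) - 1) * (-4 : k) ^ (p - 1) = -((-4 : k) ^ (p - 1)) ∧
    ((p : k) - 1) * (-4 : k) ^ (p - 1) ≠ 0 := by
  have hp5' : 5 ≤ p := by omega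
  have hn1 : 1 ≤ p - 1 := by omega
  have hs12 : p - 2 = (p - 1) - 1 := by omega
  have hcc : cc k p (p-1) (p-2) (p-1) (2*p-1)
      = coeff (expv (p-1) ((p-1)-1) (p-1) (2*(p-1)+1)) ((vpl k * kappaR k) ^ (p-1)) := by
    rw [cc, show p - 2 = (p-1) - 1 from by omega, show 2*p - 1 = 2*(p-1)+1 from by omega]
  have hval : coeff (Finsupp.single 1 ((p-1)-1)) (cc k p (p-1) (p-2) (p-1) (2*p-1))
      = (((p-1 : ℕ)) : k) * (-4) ^ (p-1) := by
    rw [hcc]; exact cc_main k (p-1) hn1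
  have hcast : (((p-1 : ℕ)) : k) = (p : k) - 1 := by
    rw [Nat.cast_sub (by omega : 1 ≤ p)]; norm_num
  have hpk : (p : k) = 0 := CharP.cast_eq_zero k p
  have h4 : (-4 : k) ≠ 0 := by
    intro h
    have h4' : ((4:ℕ) : k) = 0 := by rw [Nat.cast_ofNat]; exact neg_eq_zero.mp h
    have hdvd := (CharP.cast_eq_zero_iff k p 4).mp h4'
    have := Nat.le_of_dvd (by norm_num) hdvd
    omega
  have hvne : ((p:k) - 1) * (-4:k) ^ (p-1) ≠ 0 := by
    rw [hpk, zero_sub, neg_one_mul, neg_ne_zero]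
    exact pow_ne_zero _ h4
  refine ⟨?_, ?_, ?_, ?_, hvne⟩
  · rw [show 2*p - 2 = 2*(p-1) from by omega]
    exact coeff_kappaK_pow k (p-1)
  · apply le_antisymm
    · rw [degreeOf_le_iff]
      intro m hm
      rw [mem_support_iff, hcc] at hm
      have := (cc_support k (p-1) hn1 m hm).1
      omega
    · have hne : coeff (Finsupp.single 1 ((p-1)-1)) (cc k p (p-1) (p-2) (p-1) (2*p-1)) ≠ 0 := by
        rw [hval, hcast]; exact hvne
      have hmem := mem_support_iff.mpr hne
      have hle := monomial_le_degreeOf 1 hmem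
      rw [hs12]
      simp only [Finsupp.single_eq_same] at hle; rw [hs12] at hle; exact hle
  · intro m hm1
    by_cases he : m = Finsupp.single 1 (p - 2)
    · rw [if_pos he, he, show Finsupp.single (1:Fin 3) (p-2) = Finsupp.single 1 ((p-1)-1) from by
        rw [hs12]]
      rw [hval, hcast]
    · rw [if_neg he]
      by_contra h0
      rw [hcc] at h0
      have hmm := (cc_support k (p-1) hn1 m h0).2 (by omega)
      rw [← hs12] at hmm
      exact he hmm
  · rw [hpk]; ring


end Stmt5
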